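/- For any group G and any i, the quotient G_r^{(i)} / G_r^{(i+1)} is a torsion-free abelian group. -/

import Mathlib

/-- The subgroup generated by commutators of elements of a set `S`. -/
def commutatorOfSet {G : Type*} [Group G] (S : Set G) : Subgroup G :=
  Subgroup.closure {x | ∃ a ∈ S, ∃ b ∈ S, x = a * b * a⁻¹ * b⁻¹}

/-- The rational derived series of a group `G`. -/
def ratDerivedSeries (G : Type*) [Group G] : ℕ → Set G
  | 0 => Set.univ
  | i + 1 =>
      {g : G | g ∈ ratDerivedSeries G i ∧
        ∃ k : ℕ, 0 < k ∧ g ^ k ∈ commutatorOfSet (ratDerivedSeries G i)}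

lemma commutatorOfSet_coe {G : Type*} [Group G] (H : Subgroup G) :
    commutatorOfSet (H : Set G) = ⁅H, H⁆ := by
  rw [commutatorOfSet, Subgroup.commutator_def]
  congr 1
  ext x
  constructor
  · rintro ⟨a, ha, b, hb, rfl⟩
    exact ⟨a, ha, b, hb, rfl⟩
  · rintro ⟨a, ha, b, hb, rfl⟩
    exact ⟨a, ha, b, hb, rfl⟩

/-- The "rational closure of the commutator subgroup" inside a group `H`. -/
def ratCore (H : Type*) [Group H] : Subgroup H where
  carrier := {x | ∃ k : ℕ, 0 < k ∧ x ^ k ∈ commutator H}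
  one_mem' := ⟨1, one_pos, by simpa using (commutator H).one_mem⟩
  inv_mem' := by
    rintro x ⟨k, hk, hx⟩
    exact ⟨k, hk, by rw [inv_pow]; exact (commutator H).inv_mem hx⟩
  mul_mem' := by
    rintro x y ⟨k, hk, hx⟩ ⟨m, hm, hy⟩
    refine ⟨k * m, Nat.mul_pos hk hm, ?_⟩
    have h1 : (Abelianization.of (x * y) : Abelianization H) ^ (k * m) = 1 := by
      have hxy : Abelianization.of (x : H) * Abelianization.of y
          = Abelianization.of x * Abelianization.of y := rfl
      have hx1 : (Abelianization.of x) ^ k = 1 := by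
        rw [← map_pow]
        exact (QuotientGroup.eq_one_iff _).mpr hx
      have hy1 : (Abelianization.of y) ^ m = 1 := by
        rw [← map_pow]
        exact (QuotientGroup.eq_one_iff _).mpr hy
      have h2 : (Abelianization.of x : Abelianization H) ^ (k * m) = 1 := by
        rw [pow_mul, hx1, one_pow]
      have h3 : (Abelianization.of y : Abelianization H) ^ (k * m) = 1 := by
        rw [mul_comm, pow_mul, hy1, one_pow]
      rw [map_mul, mul_pow, h2, h3, one_mul]
    rw [← map_pow] at h1
    exact (QuotientGroup.eq_one_iff _).mp h1

lemma mem_ratCore_iff {H : Type*} [Group H] (x : H) :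
    x ∈ ratCore H ↔ ∃ k : ℕ, 0 < k ∧ x ^ k ∈ commutator H := Iff.rfl

lemma commutator_le_ratCore (H : Type*) [Group H] : commutator H ≤ ratCore H :=
  fun x hx => ⟨1, one_pos, by simpa using hx⟩

instance ratCore_normal (H : Type*) [Group H] : (ratCore H).Normal := by
  constructor
  rintro n ⟨k, hk, hn⟩ g
  refine ⟨k, hk, ?_⟩
  rw [conj_pow]
  exact (commutator H).normal_of_characteristic.conj_mem _ hn g

/-- Pushing `ratCore H` forward along the inclusion of a subgroup. -/
lemma coe_map_ratCore {G : Type*} [Group G] (H : Subgroup G) :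
    ((ratCore H).map H.subtype : Set G)
      = {g : G | g ∈ H ∧ ∃ k : ℕ, 0 < k ∧ g ^ k ∈ ⁅H, H⁆} := by
  have hcomm : (commutator H).map H.subtype = ⁅H, H⁆ := by
    rw [commutator_def, Subgroup.map_commutator]
    rw [← MonoidHom.range_eq_map, Subgroup.range_subtype]
  ext g
  simp only [Set.mem_setOf_eq, SetLike.mem_coe, Subgroup.mem_map]
  constructor
  · rintro ⟨x, ⟨k, hk, hx⟩, rfl⟩
    refine ⟨x.2, k, hk, ?_⟩
    rw [← hcomm]
    exact ⟨x ^ k, hx, by simp⟩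
  · rintro ⟨hg, k, hk, hgk⟩
    refine ⟨⟨g, hg⟩, ⟨k, hk, ?_⟩, rfl⟩
    rw [← hcomm] at hgk
    obtain ⟨y, hy, hyg⟩ := hgk
    have : y = (⟨g, hg⟩ : H) ^ k := by
      apply Subtype.ext
      simpa using hyg
    rwa [← this]

lemma ratDerivedSeries_step {G : Type*} [Group G] {H : Subgroup G} {i : ℕ}
    (hH : (H : Set G) = ratDerivedSeries G i) :
    (((ratCore H).map H.subtype : Subgroup G) : Set G) = ratDerivedSeries G (i + 1) := by
  rw [coe_map_ratCore]
  have : commutatorOfSet (ratDerivedSeries G i) = ⁅H, H⁆ := by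
    rw [← hH, commutatorOfSet_coe]
  show _ = {g : G | g ∈ ratDerivedSeries G i ∧
      ∃ k : ℕ, 0 < k ∧ g ^ k ∈ commutatorOfSet (ratDerivedSeries G i)}
  rw [this, ← hH]
  rfl

lemma ratDerivedSeries_subgroup (G : Type*) [Group G] (i : ℕ) :
    ∃ H : Subgroup G, (H : Set G) = ratDerivedSeries G i := by
  induction i with
  | zero => exact ⟨⊤, rfl⟩
  | succ n ih =>
    obtain ⟨H, hH⟩ := ih
    exact ⟨(ratCore H).map H.subtype, ratDerivedSeries_step hH⟩

theorem stmt3 (G : Type*) [Group G] (i : ℕ) :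
    ∃ H K : Subgroup G,
      (H : Set G) = ratDerivedSeries G i ∧
      (K : Set G) = ratDerivedSeries G (i + 1) ∧
      ∃ hn : (K.subgroupOf H).Normal,
        letI := hn
        (∀ a b : H ⧸ K.subgroupOf H, a * b = b * a) ∧
        (∀ a : H ⧸ K.subgroupOf H, ∀ n : ℕ, 0 < n → a ^ n = 1 → a = 1) := by
  obtain ⟨H, hH⟩ := ratDerivedSeries_subgroup G i
  refine ⟨H, (ratCore H).map H.subtype, hH, ratDerivedSeries_step hH, ?_⟩
  have hsub : ((ratCore H).map H.subtype).subgroupOf H = ratCore H := by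
    rw [← Subgroup.comap_subtype]
    exact Subgroup.comap_map_eq_self_of_injective H.subtype_injective _
  rw [hsub]
  refine ⟨ratCore_normal H, ?_, ?_⟩
  · intro a b
    induction a using QuotientGroup.induction_on
    induction b using QuotientGroup.induction_on
    rename_i x y
    rw [← QuotientGroup.mk_mul, ← QuotientGroup.mk_mul, QuotientGroup.eq]
    apply commutator_le_ratCore
    have : (x * y)⁻¹ * (y * x) = (open scoped commutatorElement in ⁅y⁻¹, x⁻¹⁆) := by group
    rw [this]
    exact Subgroup.commutator_mem_commutator (Subgroup.mem_top _) (Subgroup.mem_top _)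
  · intro a n hn han
    induction a using QuotientGroup.induction_on
    rename_i x
    rw [← QuotientGroup.mk_pow, QuotientGroup.eq_one_iff] at han
    obtain ⟨k, hk, hxk⟩ := han
    rw [QuotientGroup.eq_one_iff]
    exact ⟨n * k, Nat.mul_pos hn hk, by rwa [pow_mul]⟩
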